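/- arXiv:1105.1361 — 3 statements merged into one kernel-verified Lean document; each statement's English description precedes it below -/
import Mathlib

section
/- With t(x,y) the first time the no-observation recursion started at x exceeds y, for fixed x < y one has t(x,y)·|log(1−ρ)| → log(1+e^y) − log(1+e^x) as ρ → 0; equivalently t(x,y) = ((log(1+e^y)−log(1+e^x))/|log(1−ρ)|)(1+o(1)) as ρ → 0. -/
/-- Asymptotics of the hitting time as ρ → 0:
t(x,y)·|log(1−ρ)| → log(1+e^y) − log(1+e^x). -/
theorem stmt7 (x y : ℝ) (hxy : x < y) (Z : ℝ → ℕ → ℝ) (T : ℝ → ℕ)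
    (h0 : ∀ ρ ∈ Set.Ioo (0:ℝ) 1, Z ρ 0 = x)
    (hrec : ∀ ρ ∈ Set.Ioo (0:ℝ) 1, ∀ k,
      Z ρ (k + 1) = Z ρ k + |Real.log (1 - ρ)| + Real.log (1 + ρ * Real.exp (-(Z ρ k))))
    (hT : ∀ ρ ∈ Set.Ioo (0:ℝ) 1, y < Z ρ (T ρ) ∧ ∀ k < T ρ, Z ρ k ≤ y) :
    Filter.Tendsto (fun ρ : ℝ => (T ρ : ℝ) * |Real.log (1 - ρ)|)
      (nhdsWithin 0 (Set.Ioo 0 1))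
      (nhds (Real.log (1 + Real.exp y) - Real.log (1 + Real.exp x))) := by
  set L := Real.log (1 + Real.exp y) - Real.log (1 + Real.exp x) with hLdef
  -- exact identity for the recursion
  have key : ∀ ρ ∈ Set.Ioo (0:ℝ) 1, ∀ k : ℕ,
      Real.log (1 + Real.exp (Z ρ k)) =
        Real.log (1 + Real.exp x) + k * |Real.log (1 - ρ)| := by
    intro ρ hρ
    obtain ⟨hρ0, hρ1⟩ := hρ
    have h1ρ : (0:ℝ) < 1 - ρ := by linarith
    have hlogneg : Real.log (1 - ρ) < 0 := Real.log_neg h1ρ (by linarith)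
    have habs : |Real.log (1 - ρ)| = -Real.log (1 - ρ) := abs_of_neg hlogneg
    intro k
    induction k with
    | zero => simp [h0 ρ ⟨hρ0, hρ1⟩]
    | succ k ih =>
      have hupos : (0:ℝ) < Real.exp (Z ρ k) := Real.exp_pos _
      have hbpos : (0:ℝ) < 1 + ρ * Real.exp (-(Z ρ k)) := by
        have := Real.exp_pos (-(Z ρ k)); nlinarith
      have hexp : 1 + Real.exp (Z ρ (k + 1)) = (1 + Real.exp (Z ρ k)) / (1 - ρ) := by
        rw [hrec ρ ⟨hρ0, hρ1⟩ k, habs]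
        rw [Real.exp_add, Real.exp_add, Real.exp_neg, Real.exp_log h1ρ,
          Real.exp_log hbpos]
        rw [Real.exp_neg]
        field_simp
        ring
      have h1u : (0:ℝ) < 1 + Real.exp (Z ρ k) := by positivity
      rw [hexp, Real.log_div (ne_of_gt h1u) (ne_of_gt h1ρ), ih]
      push_cast
      rw [habs]
      ring
  -- bounds : L < T·D ≤ L + D on Ioo 0 1
  have hbound : ∀ ρ ∈ Set.Ioo (0:ℝ) 1,
      L < (T ρ : ℝ) * |Real.log (1 - ρ)| ∧
      (T ρ : ℝ) * |Real.log (1 - ρ)| ≤ L + |Real.log (1 - ρ)| := by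
    intro ρ hρ
    obtain ⟨hyZ, hZle⟩ := hT ρ hρ
    have hlow : L < (T ρ : ℝ) * |Real.log (1 - ρ)| := by
      have h1 : Real.log (1 + Real.exp y) < Real.log (1 + Real.exp (Z ρ (T ρ))) :=
        Real.log_lt_log (by positivity) (by linarith [Real.exp_lt_exp.mpr hyZ])
      have h2 := key ρ hρ (T ρ)
      rw [h2] at h1
      simp only [hLdef]
      linarith
    refine ⟨hlow, ?_⟩
    have hTpos : 0 < T ρ := by
      rcases Nat.eq_zero_or_pos (T ρ) with h | h
      · exfalso; rw [h, h0 ρ hρ] at hyZ; linarith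
      · exact h
    have hZle' : Z ρ (T ρ - 1) ≤ y := hZle _ (Nat.sub_lt hTpos one_pos)
    have h1 : Real.log (1 + Real.exp (Z ρ (T ρ - 1))) ≤ Real.log (1 + Real.exp y) :=
      Real.log_le_log (by positivity) (by linarith [Real.exp_le_exp.mpr hZle'])
    have h2 := key ρ hρ (T ρ - 1)
    rw [h2] at h1
    have hcast : ((T ρ - 1 : ℕ) : ℝ) = (T ρ : ℝ) - 1 := by
      have := Nat.cast_sub (R := ℝ) hTpos
      simpa using this
    rw [hcast] at h1
    simp only [hLdef]
    nlinarith [abs_nonneg (Real.log (1 - ρ))]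
  -- D → 0 as ρ → 0
  have hD : Filter.Tendsto (fun ρ : ℝ => |Real.log (1 - ρ)|)
      (nhdsWithin 0 (Set.Ioo 0 1)) (nhds 0) := by
    have hc : ContinuousAt (fun ρ : ℝ => |Real.log (1 - ρ)|) 0 := by
      have h1 : ContinuousAt (fun ρ : ℝ => Real.log (1 - ρ)) 0 := by
        apply ContinuousAt.comp (x := (0:ℝ)) (g := Real.log)
        · simp only [sub_zero]; exact Real.continuousAt_log (by norm_num)
        · fun_prop
      exact h1.abs
    have := hc.tendsto
    simp only [sub_zero, Real.log_one, abs_zero] at this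
    exact this.mono_left nhdsWithin_le_nhds
  -- squeeze
  have hglo : Filter.Tendsto (fun _ : ℝ => L) (nhdsWithin 0 (Set.Ioo 0 1)) (nhds L) :=
    tendsto_const_nhds
  have hghi : Filter.Tendsto (fun ρ : ℝ => L + |Real.log (1 - ρ)|)
      (nhdsWithin 0 (Set.Ioo 0 1)) (nhds L) := by
    have := hglo.add hD
    simpa using this
  refine tendsto_of_tendsto_of_tendsto_of_le_of_le' hglo hghi ?_ ?_
  · filter_upwards [self_mem_nhdsWithin] with ρ hρ
    exact (hbound ρ hρ).1.le
  · filter_upwards [self_mem_nhdsWithin] with ρ hρ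
    exact (hbound ρ hρ).2
end

section
/- For fixed x ∈ ℝ and b ∈ ℝ, the quantity (1−ρ)^{t(x,b)} converges to (1+e^x)/(1+e^b) as ρ → 0, where t(x,b) is the first time the no-observation log-odds recursion started at x exceeds b (assuming x < b). -/
/-- For the no-observation recursion started at x < b with hitting time t(x,b),
(1−ρ)^{t(x,b)} → (1+e^x)/(1+e^b) as ρ → 0. -/
theorem stmt13 (x b : ℝ) (hxb : x < b) (Z : ℝ → ℕ → ℝ) (T : ℝ → ℕ)
    (h0 : ∀ ρ ∈ Set.Ioo (0:ℝ) 1, Z ρ 0 = x)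
    (hrec : ∀ ρ ∈ Set.Ioo (0:ℝ) 1, ∀ k,
      Z ρ (k + 1) = Z ρ k + |Real.log (1 - ρ)| + Real.log (1 + ρ * Real.exp (-(Z ρ k))))
    (hT : ∀ ρ ∈ Set.Ioo (0:ℝ) 1, b < Z ρ (T ρ) ∧ ∀ k < T ρ, Z ρ k ≤ b) :
    Filter.Tendsto (fun ρ : ℝ => (1 - ρ) ^ (T ρ))
      (nhdsWithin 0 (Set.Ioo 0 1))
      (nhds ((1 + Real.exp x) / (1 + Real.exp b))) := by
  have hexpb : (0:ℝ) < 1 + Real.exp b := by positivity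
  have hexpx : (0:ℝ) < 1 + Real.exp x := by positivity
  set L := (1 + Real.exp x) / (1 + Real.exp b) with hLdef
  have hLpos : 0 < L := by positivity
  -- key closed-form identity
  have key : ∀ ρ ∈ Set.Ioo (0:ℝ) 1, ∀ k,
      (1 - ρ) ^ k * (1 + Real.exp (Z ρ k)) = 1 + Real.exp x := by
    intro ρ hρ k
    induction k with
    | zero => simp [h0 ρ hρ]
    | succ k ih =>
      have h1 : (0:ℝ) < 1 - ρ := by linarith [hρ.2]
      have habs : |Real.log (1 - ρ)| = -Real.log (1 - ρ) := by
        rw [abs_of_nonpos]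
        exact Real.log_nonpos (by linarith [hρ.1]) (by linarith [hρ.1])
      have hpos : (0:ℝ) < 1 + ρ * Real.exp (-(Z ρ k)) := by
        have := hρ.1
        positivity
      have hexp : Real.exp (Z ρ (k + 1))
          = Real.exp (Z ρ k) * (1 - ρ)⁻¹ * (1 + ρ * Real.exp (-(Z ρ k))) := by
        rw [hrec ρ hρ k, habs, Real.exp_add, Real.exp_add, Real.exp_neg,
          Real.exp_log hpos, Real.exp_log h1]
      have hen : Real.exp (-(Z ρ k)) = (Real.exp (Z ρ k))⁻¹ := Real.exp_neg _
      have hez : (0:ℝ) < Real.exp (Z ρ k) := Real.exp_pos _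
      have hstep : (1 - ρ) * (1 + Real.exp (Z ρ (k + 1))) = 1 + Real.exp (Z ρ k) := by
        rw [hexp, hen]
        field_simp
        ring
      calc (1 - ρ) ^ (k + 1) * (1 + Real.exp (Z ρ (k + 1)))
          = (1 - ρ) ^ k * ((1 - ρ) * (1 + Real.exp (Z ρ (k + 1)))) := by ring
        _ = (1 - ρ) ^ k * (1 + Real.exp (Z ρ k)) := by rw [hstep]
        _ = 1 + Real.exp x := ih
  -- bounds
  have hbounds : ∀ ρ ∈ Set.Ioo (0:ℝ) 1,
      (1 - ρ) * L ≤ (1 - ρ) ^ (T ρ) ∧ (1 - ρ) ^ (T ρ) ≤ L := by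
    intro ρ hρ
    have h1 : (0:ℝ) < 1 - ρ := by linarith [hρ.2]
    have hT1 := (hT ρ hρ).1
    have hT2 := (hT ρ hρ).2
    -- T ρ ≠ 0
    have hTne : T ρ ≠ 0 := by
      intro h
      rw [h, h0 ρ hρ] at hT1
      linarith
    obtain ⟨m, hm⟩ := Nat.exists_eq_succ_of_ne_zero hTne
    constructor
    · -- lower bound using Z ρ m ≤ b
      have hZm : Z ρ m ≤ b := hT2 m (by omega)
      have hid := key ρ hρ m
      have hpow : (1 - ρ) ^ (T ρ) = (1 - ρ) ^ m * (1 - ρ) := by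
        rw [hm, pow_succ]
      have hpos2 : (0:ℝ) < 1 + Real.exp (Z ρ m) := by positivity
      have h2 : 1 + Real.exp (Z ρ m) ≤ 1 + Real.exp b := by
        have := Real.exp_le_exp.mpr hZm; linarith
      have h3 : (1 - ρ) ^ m = (1 + Real.exp x) / (1 + Real.exp (Z ρ m)) := by
        field_simp at hid ⊢
        linarith [hid]
      rw [hpow, h3, hLdef]
      rw [mul_comm]
      gcongr
    · -- upper bound using b < Z ρ (T ρ)
      have hid := key ρ hρ (T ρ)
      have hpos2 : (0:ℝ) < 1 + Real.exp (Z ρ (T ρ)) := by positivity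
      have h2 : 1 + Real.exp b ≤ 1 + Real.exp (Z ρ (T ρ)) := by
        have := Real.exp_le_exp.mpr hT1.le; linarith
      have h3 : (1 - ρ) ^ (T ρ) = (1 + Real.exp x) / (1 + Real.exp (Z ρ (T ρ))) := by
        field_simp at hid ⊢
        linarith [hid]
      rw [h3, hLdef]
      gcongr
  -- squeeze
  have hmem : ∀ᶠ ρ in nhdsWithin (0:ℝ) (Set.Ioo 0 1), ρ ∈ Set.Ioo (0:ℝ) 1 :=
    self_mem_nhdsWithin
  have hlow : Filter.Tendsto (fun ρ : ℝ => (1 - ρ) * L)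
      (nhdsWithin 0 (Set.Ioo 0 1)) (nhds L) := by
    have : Filter.Tendsto (fun ρ : ℝ => (1 - ρ) * L) (nhds 0) (nhds ((1 - 0) * L)) := by
      exact ((tendsto_const_nhds.sub Filter.tendsto_id).mul tendsto_const_nhds)
    simpa using this.mono_left nhdsWithin_le_nhds
  refine tendsto_of_tendsto_of_tendsto_of_le_of_le' hlow tendsto_const_nhds
    (hmem.mono fun ρ hρ => (hbounds ρ hρ).1)
    (hmem.mono fun ρ hρ => (hbounds ρ hρ).2)
end

section
/- Let X₁, X₂, ... be i.i.d. with density f₁, let L(x) = f₁(x)/f₀(x) be the likelihood ratio with E₁[f₀(X)/f₁(X)] ≤ 1, and let ρ ∈ (0,1), z₀ ∈ ℝ. Define η_n = log[e^{z₀} + ∑_{k=0}^{n−1} ρ(1−ρ)^k ∏_{i=1}^k f₀(X_i)/f₁(X_i)]. Then E₁[sup_n η_n] ≤ log(e^{z₀} + 1); in particular, by Jensen's inequality, E₁[η(z₀)] ≤ log(e^{z₀}+1) where η(z₀) = lim_n η_n (the limit exists a.s. by monotone convergence of the inner sum). -/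
open MeasureTheory ProbabilityTheory

/-- E₁[sup_n η_n] ≤ log(e^{z₀}+1), where
η_n = log(e^{z₀} + ∑_{k=0}^{n−1} ρ(1−ρ)^k ∏_{i=1}^k f₀(X_i)/f₁(X_i)),
the likelihood ratios R_i = f₀(X_i)/f₁(X_i) being i.i.d. nonnegative with E₁[R] ≤ 1;
in particular E₁[η(z₀)] ≤ log(e^{z₀}+1) for the limit η(z₀). -/
theorem stmt14 {Ω : Type*} [MeasurableSpace Ω] (μ : Measure Ω) [IsProbabilityMeasure μ]
    (ρ z₀ : ℝ) (hρ : ρ ∈ Set.Ioo (0:ℝ) 1)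
    (R : ℕ → Ω → ℝ) (hmeas : ∀ i, Measurable (R i)) (hpos : ∀ i ω, 0 ≤ R i ω)
    (hiid : iIndepFun R μ)
    (hident : ∀ i, Measure.map (R i) μ = Measure.map (R 0) μ)
    (hint : ∀ i, Integrable (R i) μ)
    (hmean : ∀ i, (∫ ω, R i ω ∂μ) ≤ 1)
    (η : ℕ → Ω → ℝ)
    (hη : ∀ n ω, η n ω = Real.log (Real.exp z₀
      + ∑ k ∈ Finset.range n, ρ * (1 - ρ) ^ k * ∏ i ∈ Finset.range k, R i ω)) :
    (∫ ω, (⨆ n, η n ω) ∂μ) ≤ Real.log (Real.exp z₀ + 1) ∧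
    (∫ ω, Real.log (Real.exp z₀
        + ∑' k : ℕ, ρ * (1 - ρ) ^ k * ∏ i ∈ Finset.range k, R i ω) ∂μ)
      ≤ Real.log (Real.exp z₀ + 1) := by
  obtain ⟨hρ0, hρ1⟩ := hρ
  set c : ℝ := Real.exp z₀ + 1 with hc
  have hez : (0:ℝ) < Real.exp z₀ := Real.exp_pos z₀
  have hcpos : (0:ℝ) < c := by positivity
  -- the summands
  set a : ℕ → Ω → ℝ := fun k ω => ρ * (1 - ρ) ^ k * ∏ i ∈ Finset.range k, R i ω with ha
  have ha_nonneg : ∀ k ω, 0 ≤ a k ω := fun k ω => by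
    apply mul_nonneg (mul_nonneg hρ0.le (pow_nonneg (by linarith) k))
    exact Finset.prod_nonneg fun i _ => hpos i ω
  have ha_meas : ∀ k, Measurable (a k) := fun k =>
    (measurable_const.mul (Finset.measurable_prod _ fun i _ => hmeas i))
  -- integrability and integral of products
  have hprod : ∀ k, Integrable (fun ω => ∏ i ∈ Finset.range k, R i ω) μ ∧
      (∫ ω, ∏ i ∈ Finset.range k, R i ω ∂μ) = ∏ i ∈ Finset.range k, ∫ ω, R i ω ∂μ := by
    intro k
    induction k with
    | zero => simp
    | succ n ih =>
      have hI : IndepFun (∏ j ∈ Finset.range n, R j) (R n) μ :=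
        hiid.indepFun_prod_range_succ hmeas n
      have hfun : (fun ω => ∏ i ∈ Finset.range (n+1), R i ω)
          = (∏ j ∈ Finset.range n, R j) * R n := by
        funext ω
        simp [Finset.prod_range_succ, Finset.prod_apply]
      have hfun' : (fun ω => ∏ i ∈ Finset.range n, R i ω)
          = (∏ j ∈ Finset.range n, R j) := by
        funext ω; simp [Finset.prod_apply]
      constructor
      · rw [hfun]
        exact hI.integrable_mul (hfun' ▸ ih.1) (hint n)
      · rw [hfun, hI.integral_mul_eq_mul_integral (hfun' ▸ ih.1).1 (hint n).1,
          Finset.prod_range_succ, ← ih.2]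
        rw [hfun']
  have hprod_le : ∀ k, (∫ ω, ∏ i ∈ Finset.range k, R i ω ∂μ) ≤ 1 := by
    intro k
    rw [(hprod k).2]
    exact Finset.prod_le_one (fun i _ => integral_nonneg (hpos i)) (fun i _ => hmean i)
  -- integrability and integral bound for a k
  have ha_int : ∀ k, Integrable (a k) μ := fun k =>
    ((hprod k).1.const_mul _)
  have ha_integral : ∀ k, (∫ ω, a k ω ∂μ) = ρ * (1 - ρ) ^ k * ∫ ω, ∏ i ∈ Finset.range k, R i ω ∂μ := by
    intro k; rw [ha]; simp_rw [mul_assoc]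
    rw [integral_const_mul, integral_const_mul]
  have ha_int_le : ∀ k, (∫ ω, a k ω ∂μ) ≤ ρ * (1 - ρ) ^ k := by
    intro k
    rw [ha_integral k]
    calc ρ * (1 - ρ) ^ k * ∫ ω, ∏ i ∈ Finset.range k, R i ω ∂μ
        ≤ ρ * (1 - ρ) ^ k * 1 := by
          apply mul_le_mul_of_nonneg_left (hprod_le k)
          exact mul_nonneg hρ0.le (pow_nonneg (by linarith) k)
      _ = ρ * (1 - ρ) ^ k := mul_one _
  -- geometric bound
  have hb_sum : Summable (fun k : ℕ => ρ * (1 - ρ) ^ k) :=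
    (summable_geometric_of_lt_one (by linarith) (by linarith)).mul_left ρ
  have hb_tsum : (∑' k : ℕ, ρ * (1 - ρ) ^ k) = 1 := by
    rw [tsum_mul_left, tsum_geometric_of_lt_one (by linarith) (by linarith)]
    rw [sub_sub_cancel, mul_inv_cancel₀ hρ0.ne']
  -- summability of integrals of norms
  have ha_norm : ∀ k, (∫ ω, ‖a k ω‖ ∂μ) = ∫ ω, a k ω ∂μ := by
    intro k
    apply integral_congr_ae
    filter_upwards with ω using Real.norm_of_nonneg (ha_nonneg k ω)
  have hsum_int : Summable (fun k => ∫ ω, ‖a k ω‖ ∂μ) := by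
    apply Summable.of_nonneg_of_le (fun k => integral_nonneg fun ω => norm_nonneg _)
      (fun k => ?_) hb_sum
    rw [ha_norm k]; exact ha_int_le k
  -- the limit S
  set S : Ω → ℝ := fun ω => ∑' k, a k ω with hS
  have hHasSumInt : HasSum (fun k => ∫ ω, a k ω ∂μ) (∫ ω, S ω ∂μ) :=
    hasSum_integral_of_summable_integral_norm ha_int hsum_int
  have hintS_le : (∫ ω, S ω ∂μ) ≤ 1 := by
    rw [← hHasSumInt.tsum_eq, ← hb_tsum]
    exact Summable.tsum_le_tsum ha_int_le (hsum_int.congr fun k => (ha_norm k)) hb_sum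
  -- lintegral control, a.e. summability, integrability of S
  set F : Ω → ENNReal := fun ω => ∑' k, ENNReal.ofReal (a k ω) with hF
  have hF_meas : Measurable F :=
    Measurable.ennreal_tsum fun k => (ha_meas k).ennreal_ofReal
  have hlint_a : ∀ k, (∫⁻ ω, ENNReal.ofReal (a k ω) ∂μ) = ENNReal.ofReal (∫ ω, a k ω ∂μ) :=
    fun k => (ofReal_integral_eq_lintegral_ofReal (ha_int k)
      (Filter.Eventually.of_forall (ha_nonneg k))).symm
  have hlintF : (∫⁻ ω, F ω ∂μ) ≤ ENNReal.ofReal 1 := by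
    rw [hF]
    rw [lintegral_tsum fun k => ((ha_meas k).ennreal_ofReal).aemeasurable]
    calc (∑' k, ∫⁻ ω, ENNReal.ofReal (a k ω) ∂μ)
        = ∑' k, ENNReal.ofReal (∫ ω, a k ω ∂μ) := by simp_rw [hlint_a]
      _ ≤ ∑' k, ENNReal.ofReal (ρ * (1 - ρ) ^ k) :=
          ENNReal.tsum_le_tsum fun k => ENNReal.ofReal_le_ofReal (ha_int_le k)
      _ = ENNReal.ofReal (∑' k, ρ * (1 - ρ) ^ k) :=
          (ENNReal.ofReal_tsum_of_nonneg
            (fun k => mul_nonneg hρ0.le (pow_nonneg (by linarith) k)) hb_sum).symm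
      _ = ENNReal.ofReal 1 := by rw [hb_tsum]
  have hlintF_ne : (∫⁻ ω, F ω ∂μ) ≠ ⊤ :=
    (lt_of_le_of_lt hlintF ENNReal.ofReal_lt_top).ne
  have hFae : ∀ᵐ ω ∂μ, F ω < ⊤ := ae_lt_top' hF_meas.aemeasurable hlintF_ne
  have hsummae : ∀ᵐ ω ∂μ, Summable (fun k => a k ω) := by
    filter_upwards [hFae] with ω hω
    apply summable_of_sum_range_le (c := (F ω).toReal) (fun k => ha_nonneg k ω)
    intro n
    rw [← ENNReal.ofReal_le_iff_le_toReal hω.ne, ENNReal.ofReal_sum_of_nonneg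
      (fun k _ => ha_nonneg k ω)]
    exact ENNReal.sum_le_tsum _
  -- S is a.e. equal to toReal ∘ F, hence integrable
  have hS_eq_F : ∀ᵐ ω ∂μ, S ω = (F ω).toReal := by
    filter_upwards [hFae, hsummae] with ω hω hsum
    have : ENNReal.ofReal (S ω) = F ω :=
      ENNReal.ofReal_tsum_of_nonneg (fun k => ha_nonneg k ω) hsum
    rw [← this, ENNReal.toReal_ofReal (tsum_nonneg fun k => ha_nonneg k ω)]
  have hS_int : Integrable S μ := by
    have heq : (fun ω => (F ω).toReal) =ᵐ[μ] S := hS_eq_F.mono fun ω h => h.symm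
    exact (integrable_toReal_of_lintegral_ne_top hF_meas.aemeasurable hlintF_ne).congr heq
  have hS_nonneg : ∀ ω, 0 ≤ S ω := fun ω => tsum_nonneg fun k => ha_nonneg k ω
  -- tangent line bound: log x ≤ log c + (x - c)/c for x > 0
  have htangent : ∀ x : ℝ, 0 < x → Real.log x ≤ Real.log c + (x - c) / c := by
    intro x hx
    have h1 : Real.log (x / c) ≤ x / c - 1 := Real.log_le_sub_one_of_pos (by positivity)
    rw [Real.log_div hx.ne' hcpos.ne'] at h1
    have : x / c - 1 = (x - c) / c := by field_simp
    linarith [this ▸ h1]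
  -- the function f and its integrability
  set f : Ω → ℝ := fun ω => Real.log (Real.exp z₀ + S ω) with hf
  set g : Ω → ℝ := fun ω => Real.log c + (Real.exp z₀ + S ω - c) / c with hg
  have hg_int : Integrable g μ := by
    apply Integrable.add (integrable_const _)
    exact (((integrable_const (Real.exp z₀)).add hS_int).sub (integrable_const c)).div_const c
  have hfg : ∀ ω, f ω ≤ g ω := fun ω => htangent _ (by have := hS_nonneg ω; positivity)
  have hf_lb : ∀ ω, z₀ ≤ f ω := by
    intro ω
    rw [hf]
    calc z₀ = Real.log (Real.exp z₀) := (Real.log_exp z₀).symm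
      _ ≤ Real.log (Real.exp z₀ + S ω) :=
          Real.log_le_log (Real.exp_pos z₀) (by linarith [hS_nonneg ω])
  have hf_meas : AEStronglyMeasurable f μ := by
    apply aestronglyMeasurable_iff_aemeasurable.2
    exact Real.measurable_log.comp_aemeasurable
      (measurable_const.aemeasurable.add hS_int.1.aemeasurable)
  have hf_int : Integrable f μ := by
    apply Integrable.mono' ((integrable_const |z₀|).add hg_int.abs) hf_meas
    filter_upwards with ω
    rw [Real.norm_eq_abs, abs_le]
    constructor
    · have h1 := hf_lb ω
      have h2 := neg_abs_le z₀
      have h3 := abs_nonneg (g ω)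
      simp only [Pi.add_apply]
      linarith
    · have h1 := hfg ω
      have h2 := le_abs_self (g ω)
      have h3 := abs_nonneg z₀
      simp only [Pi.add_apply]
      linarith
  -- main integral bound
  have hintg : (∫ ω, g ω ∂μ) = Real.log c + ((Real.exp z₀ + ∫ ω, S ω ∂μ) - c) / c := by
    have hg1 : Integrable (fun ω => (Real.exp z₀ + S ω - c) / c) μ :=
      (((integrable_const (Real.exp z₀)).add hS_int).sub (integrable_const c)).div_const c
    have hg2 : Integrable (fun ω => Real.exp z₀ + S ω) μ := (integrable_const _).add hS_int
    rw [hg]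
    rw [integral_add (integrable_const _) hg1, integral_div,
      integral_sub hg2 (integrable_const c), integral_add (integrable_const _) hS_int]
    simp [measure_univ]
  have hmain : (∫ ω, f ω ∂μ) ≤ Real.log c := by
    calc (∫ ω, f ω ∂μ) ≤ ∫ ω, g ω ∂μ := integral_mono hf_int hg_int hfg
      _ = Real.log c + ((Real.exp z₀ + ∫ ω, S ω ∂μ) - c) / c := hintg
      _ ≤ Real.log c + 0 := by
          apply add_le_add_right
          apply div_nonpos_of_nonpos_of_nonneg _ hcpos.le
          have := hintS_le; rw [hc]; linarith
      _ = Real.log c := add_zero _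
  -- a.e. identification of the supremum
  have hsup : ∀ᵐ ω ∂μ, (⨆ n, η n ω) = f ω := by
    filter_upwards [hsummae] with ω hsum
    have hpossum : ∀ n : ℕ, (0:ℝ) < Real.exp z₀ + ∑ k ∈ Finset.range n, a k ω := by
      intro n
      have : (0:ℝ) ≤ ∑ k ∈ Finset.range n, a k ω :=
        Finset.sum_nonneg fun k _ => ha_nonneg k ω
      linarith
    have hmono : Monotone (fun n => η n ω) := by
      apply monotone_nat_of_le_succ
      intro n
      rw [hη, hη]
      apply Real.log_le_log (hpossum n)
      rw [Finset.sum_range_succ]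
      have h := ha_nonneg n ω
      simp only [ha] at h
      linarith
    have htend : Filter.Tendsto (fun n => η n ω) Filter.atTop (nhds (f ω)) := by
      have h1 : Filter.Tendsto (fun n => ∑ k ∈ Finset.range n, a k ω)
          Filter.atTop (nhds (S ω)) := hsum.hasSum.tendsto_sum_nat
      have h2 : Filter.Tendsto (fun n => Real.exp z₀ + ∑ k ∈ Finset.range n, a k ω)
          Filter.atTop (nhds (Real.exp z₀ + S ω)) := tendsto_const_nhds.add h1
      have h3 : ContinuousAt Real.log (Real.exp z₀ + S ω) :=
        Real.continuousAt_log (by have := hS_nonneg ω; positivity)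
      have h4 := (h3.tendsto).comp h2
      apply h4.congr
      intro n
      rw [hη]
      rfl
    exact (isLUB_of_tendsto_atTop hmono htend).ciSup_eq
  constructor
  · rw [integral_congr_ae hsup]
    exact hmain
  · exact hmain
end
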